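/- Assume a_{1,−1} + a_{1,0} + a_{1,1} > 0. Let ζ ∈ ℂ with |ζ| = 1 be such that a_1(ζ) ≠ 0, and let λ₁, λ₂ ∈ ℂ be the two roots of the quadratic a_1(ζ)λ² + (a_0(ζ)−1)λ + a_{−1}(ζ) = 0 (i.e. λ₁ + λ₂ = (1−a_0(ζ))/a_1(ζ) and λ₁λ₂ = a_{−1}(ζ)/a_1(ζ)). If |λ₁| = |λ₂|, then there exists k ∈ {−1,0,1} such that λ₁ = λ₂ = ζ^k. -/

import Mathlib

open Filter Topology

/- Convention: the transition probabilities a_{i,j} (i,j ∈ {−1,0,1}) are encoded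
as `v : Fin 3 → Fin 3 → ℝ`, where the index `0, 1, 2` corresponds to `−1, 0, 1`. -/

/-- `symb v i z = a_i(z) = a_{i,−1} z⁻¹ + a_{i,0} + a_{i,1} z`. -/
noncomputable def symb (v : Fin 3 → Fin 3 → ℝ) (i : Fin 3) (z : ℂ) : ℂ :=
  (v i 0 : ℂ) * z⁻¹ + (v i 1 : ℂ) + (v i 2 : ℂ) * z

/-- `symbOne v i = a_i(1) = a_{i,−1} + a_{i,0} + a_{i,1}` (as a real number). -/
def symbOne (v : Fin 3 → Fin 3 → ℝ) (i : Fin 3) : ℝ := v i 0 + v i 1 + v i 2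

/-- The fixed-point iteration θ_0 = 0, θ_{k+1} = a_{−1}(ζ) + a_0(ζ) θ_k + a_1(ζ) θ_k². -/
noncomputable def quadIter (am1 a0 a1 : ℂ) : ℕ → ℂ
  | 0 => 0
  | k + 1 => am1 + a0 * quadIter am1 a0 a1 k + a1 * (quadIter am1 a0 a1 k) ^ 2

/-- A unit complex number with real part 1 equals 1. -/
lemma unit_re_one {z : ℂ} (h1 : ‖z‖ = 1) (h2 : z.re = 1) : z = 1 := by
  have hsq : z.re ^ 2 + z.im ^ 2 = 1 := by
    have h3 := Complex.sq_norm z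
    rw [h1] at h3
    simpa [Complex.normSq_apply, sq] using h3.symm
  have him : z.im = 0 := by nlinarith
  exact Complex.ext (by simpa using h2) (by simpa using him)

/-- If `p·x + q·y + s·t = p + q + s` with `x,y,t ≤ 1`, `p,q,s ≥ 0` and `p > 0`,
then `x = 1`. -/
lemma three_term_eq {p q s x y t : ℝ} (hq : 0 ≤ q) (hs : 0 ≤ s)
    (hx : x ≤ 1) (hy : y ≤ 1) (ht : t ≤ 1)
    (h : p * x + q * y + s * t = p + q + s) (hp : 0 < p) : x = 1 := by
  refine le_antisymm hx ?_
  nlinarith [mul_le_mul_of_nonneg_left hy hq, mul_le_mul_of_nonneg_left ht hs]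

/-- Pure real arithmetic: the two key inequalities force `a = c` and `r = 1`. -/
lemma ac_r_eq {a c r : ℝ} (ha : 0 < a) (hc : 0 ≤ c) (hr : 0 < r)
    (k1 : a + c ≤ 2 * a * r) (k2 : (a + c) * r ≤ 2 * c) : a = c ∧ r = 1 := by
  have h3 : (a + c) * ((a + c) * r) ≤ (2 * a * r) * (2 * c) :=
    mul_le_mul k1 k2 (by positivity) (by positivity)
  have h4 : (a - c) ^ 2 * r ≤ 0 := by nlinarith
  have h5 : (a - c) ^ 2 ≤ 0 := by nlinarith
  have hac : a = c := by nlinarith [sq_nonneg (a - c)]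
  constructor
  · exact hac
  · subst hac
    have hge : 1 ≤ r := by nlinarith
    have hle : r ≤ 1 := by nlinarith
    linarith

theorem stmt16 (v : Fin 3 → Fin 3 → ℝ) (hnn : ∀ i j, 0 ≤ v i j)
    (hsum : ∑ i, ∑ j, v i j = 1)
    (ha1 : 0 < symbOne v 2)
    (ζ : ℂ) (hζ : ‖ζ‖ = 1) (hA1 : symb v 2 ζ ≠ 0)
    (l1 l2 : ℂ)
    (hroots_sum : l1 + l2 = (1 - symb v 1 ζ) / symb v 2 ζ)
    (hroots_prod : l1 * l2 = symb v 0 ζ / symb v 2 ζ)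
    (habs : ‖l1‖ = ‖l2‖) :
    ∃ k : ℤ, k ∈ ({-1, 0, 1} : Set ℤ) ∧ l1 = ζ ^ k ∧ l2 = ζ ^ k := by
  set A := symb v 2 ζ with hAdef
  set B := symb v 1 ζ with hBdef
  set C := symb v 0 ζ with hCdef
  set a := symbOne v 2 with hadef
  set b := symbOne v 1 with hbdef
  set c := symbOne v 0 with hcdef
  have hζ0 : ζ ≠ 0 := by
    intro h; rw [h] at hζ; simp at hζ
  have hζinv : ‖ζ⁻¹‖ = 1 := by rw [norm_inv, hζ]; norm_num
  -- row sums
  have hsum' : c + b + a = 1 := by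
    simpa [Fin.sum_univ_three, symbOne, hadef, hbdef, hcdef] using hsum
  have ha0 : (0:ℝ) ≤ a := le_of_lt ha1
  have hb0 : (0:ℝ) ≤ b := by
    have := hnn 1 0; have := hnn 1 1; have := hnn 1 2
    simp only [hbdef, symbOne]; linarith
  have hc0 : (0:ℝ) ≤ c := by
    have := hnn 0 0; have := hnn 0 1; have := hnn 0 2
    simp only [hcdef, symbOne]; linarith
  -- bounds on the symbols
  have habs_symb : ∀ i, ‖symb v i ζ‖ ≤ symbOne v i := by
    intro i
    have h1 : ‖(v i 0 : ℂ) * ζ⁻¹ + (v i 1 : ℂ) + (v i 2 : ℂ) * ζ‖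
        ≤ ‖(v i 0 : ℂ) * ζ⁻¹‖ + ‖(v i 1 : ℂ)‖
          + ‖(v i 2 : ℂ) * ζ‖ := by
      calc ‖(v i 0 : ℂ) * ζ⁻¹ + (v i 1 : ℂ) + (v i 2 : ℂ) * ζ‖
          ≤ ‖(v i 0 : ℂ) * ζ⁻¹ + (v i 1 : ℂ)‖ + ‖(v i 2 : ℂ) * ζ‖ :=
            norm_add_le _ _
        _ ≤ _ := by
            have := norm_add_le ((v i 0 : ℂ) * ζ⁻¹) ((v i 1 : ℂ))
            linarith
    simpa [symb, symbOne, norm_mul, hζ, hζinv, Complex.norm_real,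
      abs_of_nonneg (hnn i 0), abs_of_nonneg (hnn i 1), abs_of_nonneg (hnn i 2)] using h1
  have hA_le : ‖A‖ ≤ a := habs_symb 2
  have hB_le : ‖B‖ ≤ b := habs_symb 1
  have hC_le : ‖C‖ ≤ c := habs_symb 0
  -- Vieta
  have e1 : A * l1 + A * l2 = 1 - B := by
    have : A * (l1 + l2) = 1 - B := by rw [hroots_sum]; field_simp
    linear_combination this
  have e2 : A * (l1 * l2) = C := by rw [hroots_prod]; field_simp
  -- roots are nonzero
  have hb_lt : b < 1 := by linarith
  have hl1 : l1 ≠ 0 := by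
    intro h0
    have hl2 : l2 = 0 := by
      have : ‖l2‖ = 0 := by rw [← habs, h0, norm_zero]
      simpa using this
    rw [h0, hl2] at e1
    have hB1 : B = 1 := by linear_combination e1
    have : ‖B‖ = 1 := by rw [hB1]; simp
    linarith [hB_le, this.symm.le.trans hB_le]
  have hl2 : l2 ≠ 0 := by
    intro h0
    apply hl1
    have : ‖l1‖ = 0 := by rw [habs, h0, norm_zero]
    simpa using this
  set r := ‖l1‖ with hrdef
  have hr0 : 0 < r := by
    simpa [hrdef, norm_pos_iff] using hl1
  -- |C| = |A| r²
  have hCr : ‖C‖ = ‖A‖ * r ^ 2 := by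
    rw [← e2, norm_mul, norm_mul, ← habs]
    ring
  -- a + c ≤ |1 - B|
  have h1 : a + c ≤ ‖1 - B‖ := by
    have h2 : ‖(1:ℂ)‖ - ‖B‖ ≤ ‖1 - B‖ := by
      simpa using norm_sub_norm_le (1:ℂ) B
    simp only [norm_one] at h2
    linarith
  -- |1 - B| ≤ 2 |A| r
  have h2 : ‖1 - B‖ ≤ 2 * (‖A‖ * r) := by
    rw [← e1]
    calc ‖A * l1 + A * l2‖
        ≤ ‖A * l1‖ + ‖A * l2‖ := norm_add_le _ _
      _ = 2 * (‖A‖ * r) := by rw [norm_mul, norm_mul, ← habs]; ring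
  -- derive a = c and r = 1
  have key1 : a + c ≤ 2 * a * r := by
    have t1 := mul_le_mul_of_nonneg_right hA_le (le_of_lt hr0)
    have t2 := h1.trans h2
    nlinarith [t1, t2]
  have key2 : (a + c) * r ≤ 2 * c := by
    have t1 : (a + c) * r ≤ 2 * (‖A‖ * r) * r :=
      mul_le_mul_of_nonneg_right (h1.trans h2) (le_of_lt hr0)
    have t2 : 2 * (‖A‖ * r) * r = 2 * ‖C‖ := by rw [hCr]; ring
    linarith [hC_le]
  obtain ⟨hac, hr1⟩ := ac_r_eq ha1 hc0 hr0 key1 key2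
  -- equality chain
  have hAabs : ‖A‖ = a := by
    refine le_antisymm hA_le ?_
    have t2 := h1.trans h2
    rw [hr1, mul_one] at t2
    linarith
  have hre1 : B.re + (A * l1).re + (A * l2).re = 1 := by
    have : (B + A * l1 + A * l2) = 1 := by linear_combination e1
    calc B.re + (A * l1).re + (A * l2).re = (B + A * l1 + A * l2).re := by simp
      _ = 1 := by rw [this]; simp
  have hBre : B.re ≤ b := (Complex.re_le_norm B).trans hB_le
  have habl1 : ‖A * l1‖ = a := by
    rw [norm_mul, hAabs, ← hrdef, hr1, mul_one]
  have habl2 : ‖A * l2‖ = a := by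
    rw [norm_mul, hAabs, ← habs, hr1, mul_one]
  have hre_l1 : (A * l1).re = a := by
    have u1 : (A * l1).re ≤ a := (Complex.re_le_norm _).trans_eq habl1
    have u2 : (A * l2).re ≤ a := (Complex.re_le_norm _).trans_eq habl2
    linarith
  have hre_l2 : (A * l2).re = a := by
    have u1 : (A * l1).re ≤ a := (Complex.re_le_norm _).trans_eq habl1
    have u2 : (A * l2).re ≤ a := (Complex.re_le_norm _).trans_eq habl2
    linarith
  -- expand (A * l) .re for a root l of modulus 1
  have expand : ∀ l : ℂ, ‖l‖ = 1 → (A * l).re =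
      v 2 0 * (ζ⁻¹ * l).re + v 2 1 * l.re + v 2 2 * (ζ * l).re := by
    intro l _
    have : A * l = (v 2 0 : ℂ) * (ζ⁻¹ * l) + (v 2 1 : ℂ) * l + (v 2 2 : ℂ) * (ζ * l) := by
      rw [hAdef]; unfold symb; ring
    rw [this]
    simp [Complex.add_re, Complex.re_ofReal_mul]
  have habsl1 : ‖l1‖ = 1 := by rw [← hrdef]; exact hr1
  have habsl2 : ‖l2‖ = 1 := by rw [← habs]; exact hr1
  have bound : ∀ (w l : ℂ), ‖w‖ = 1 → ‖l‖ = 1 → (w * l).re ≤ 1 := by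
    intro w l hw hl
    have := Complex.re_le_norm (w * l)
    rwa [norm_mul, hw, hl, mul_one] at this
  -- the per-term equalities
  have main : ∀ l : ℂ, ‖l‖ = 1 → (A * l).re = a →
      (0 < v 2 0 → ζ⁻¹ * l = 1) ∧ (0 < v 2 1 → l = 1) ∧ (0 < v 2 2 → ζ * l = 1) := by
    intro l hl hre
    have hx : (ζ⁻¹ * l).re ≤ 1 := bound _ _ hζinv hl
    have hy : l.re ≤ 1 := by
      have := Complex.re_le_norm l; rwa [hl] at this
    have ht : (ζ * l).re ≤ 1 := bound _ _ hζ hl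
    have hsum3 : v 2 0 * (ζ⁻¹ * l).re + v 2 1 * l.re + v 2 2 * (ζ * l).re
        = v 2 0 + v 2 1 + v 2 2 := by
      rw [← expand l hl, hre, hadef]; rfl
    refine ⟨fun hp => ?_, fun hp => ?_, fun hp => ?_⟩
    · refine unit_re_one ?_ ?_
      · rw [norm_mul, hζinv, hl, mul_one]
      · exact three_term_eq (hnn 2 1) (hnn 2 2) hx hy ht hsum3 hp
    · refine unit_re_one hl ?_
      have h' : v 2 1 * l.re + v 2 0 * (ζ⁻¹ * l).re + v 2 2 * (ζ * l).re
          = v 2 1 + v 2 0 + v 2 2 := by linarith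
      exact three_term_eq (hnn 2 0) (hnn 2 2) hy hx ht h' hp
    · refine unit_re_one ?_ ?_
      · rw [norm_mul, hζ, hl, mul_one]
      · have h' : v 2 2 * (ζ * l).re + v 2 0 * (ζ⁻¹ * l).re + v 2 1 * l.re
            = v 2 2 + v 2 0 + v 2 1 := by linarith
        exact three_term_eq (hnn 2 0) (hnn 2 1) ht hx hy h' hp
  have m1 := main l1 habsl1 hre_l1
  have m2 := main l2 habsl2 hre_l2
  -- some v 2 j is positive
  have hcase : 0 < v 2 0 ∨ 0 < v 2 1 ∨ 0 < v 2 2 := by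
    by_contra h
    push_neg at h
    obtain ⟨h0, h1', h2'⟩ := h
    have := hnn 2 0; have := hnn 2 1; have := hnn 2 2
    have : a = 0 := by simp only [hadef, symbOne]; linarith
    linarith
  rcases hcase with hp | hp | hp
  · refine ⟨1, by simp, ?_, ?_⟩
    · have := m1.1 hp
      have : l1 = ζ := by
        field_simp at this
        linear_combination this
      simpa using this
    · have := m2.1 hp
      have : l2 = ζ := by
        field_simp at this
        linear_combination this
      simpa using this
  · refine ⟨0, by simp, ?_, ?_⟩
    · simpa using m1.2.1 hp
    · simpa using m2.2.1 hp
  · refine ⟨-1, by simp, ?_, ?_⟩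
    · have h := m1.2.2 hp
      rw [zpow_neg, zpow_one]
      field_simp at h ⊢
      linear_combination h
    · have h := m2.2.2 hp
      rw [zpow_neg, zpow_one]
      field_simp at h ⊢
      linear_combination h
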